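/- For diagonal A = diag(a₁,…,aₙ) with aᵢ ∈ [0,1] and any real symmetric positive definite Σ: det(Σ + A)^{1/n} ≥ (∏ᵢ(1−aᵢ))^{1/n}·det(Σ)^{1/n} + (∏ᵢ aᵢ)^{1/n}·det(Σ + I)^{1/n}. -/

import Mathlib

open Matrix

section Stmt19Aux

variable {m : Type*} [Fintype m] [DecidableEq m]

private lemma stmt19_posDef_of_psd_det {M : Matrix m m ℝ} (h : M.PosSemidef)
    (hd : IsUnit M.det) : M.PosDef := by
  refine PosDef.of_dotProduct_mulVec_pos h.1 fun x hx => ?_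
  rcases lt_or_eq_of_le (h.dotProduct_mulVec_nonneg x) with hlt | heq
  · exact hlt
  · exfalso
    have h0 : M *ᵥ x = 0 := (h.dotProduct_mulVec_zero_iff x).mp heq.symm
    have hinj : Function.Injective (M.mulVec) := mulVec_injective_iff_isUnit.mpr
      ((Matrix.isUnit_iff_isUnit_det M).mpr hd)
    exact hx (hinj (by simpa using h0))

private lemma stmt19_diag_nonneg {M : Matrix m m ℝ} (h : M.PosSemidef) (i : m) :
    0 ≤ M i i := by
  have hq := h.dotProduct_mulVec_nonneg (Pi.single i 1)
  rw [star_trivial] at hq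
  simpa [dotProduct, mulVec, Pi.single_apply, Finset.mul_sum] using hq

private lemma stmt19_smul_posDef {M : Matrix m m ℝ} (h : M.PosDef) {c : ℝ} (hc : 0 < c) :
    (c • M).PosDef := by
  refine PosDef.of_dotProduct_mulVec_pos ?_ fun x hx => ?_
  · have h1 := h.1
    unfold Matrix.IsHermitian at h1 ⊢
    rw [conjTranspose_smul, h1]
    simp
  · have hq := h.dotProduct_mulVec_pos hx
    rw [star_trivial] at hq ⊢
    rw [smul_mulVec, dotProduct_smul]
    exact mul_pos hc hq

omit [DecidableEq m] in
private lemma stmt19_posDef_submatrix_equiv {l : Type*} [Fintype l] [DecidableEq l]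
    {M : Matrix l l ℝ} (hM : M.PosDef) (e : m ≃ l) : (M.submatrix e e).PosDef := by
  refine PosDef.of_dotProduct_mulVec_pos (hM.1.submatrix e) fun x hx => ?_
  set y : l → ℝ := fun j => x (e.symm j) with hy
  have hy0 : y ≠ 0 := by
    intro h
    apply hx
    funext i
    have := congrFun h (e i)
    simpa [hy] using this
  have h := hM.dotProduct_mulVec_pos hy0
  rw [star_trivial] at h ⊢
  convert h using 1
  simp only [dotProduct, mulVec, submatrix_apply]
  rw [← Equiv.sum_comp e (fun j => y j * ∑ j', M j j' * y j')]
  refine Finset.sum_congr rfl fun i _ => ?_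
  rw [← Equiv.sum_comp e (fun j' => M (e i) j' * y j')]
  simp [hy]

omit [DecidableEq m] in
private lemma stmt19_toBlocks₁₁_posDef {M : Matrix (m ⊕ Fin 1) (m ⊕ Fin 1) ℝ}
    (hM : M.PosDef) : M.toBlocks₁₁.PosDef := by
  refine PosDef.of_dotProduct_mulVec_pos ?_ fun x hx => ?_
  · have h := hM.1
    ext i j
    simpa [toBlocks₁₁, conjTranspose_apply] using congrFun (congrFun h (Sum.inl i)) (Sum.inl j)
  · set y : (m ⊕ Fin 1) → ℝ := Sum.elim x 0 with hy
    have hy0 : y ≠ 0 := by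
      intro h
      apply hx
      funext i
      exact congrFun h (Sum.inl i)
    have h := hM.dotProduct_mulVec_pos hy0
    rw [star_trivial] at h ⊢
    convert h using 1
    simp [dotProduct, mulVec, Fintype.sum_sum_type, toBlocks₁₁, hy]

private lemma stmt19_corner_det {M : Matrix (m ⊕ Fin 1) (m ⊕ Fin 1) ℝ} (hM : M.PosDef) :
    M.det = M.toBlocks₁₁.det *
      (M (Sum.inr 0) (Sum.inr 0)
        - (fun i => M (Sum.inl i) (Sum.inr 0)) ⬝ᵥ M.toBlocks₁₁⁻¹ *ᵥ
            (fun i => M (Sum.inl i) (Sum.inr 0))) := by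
  set A := M.toBlocks₁₁ with hA
  set b : m → ℝ := fun i => M (Sum.inl i) (Sum.inr 0) with hb
  have hApd : A.PosDef := stmt19_toBlocks₁₁_posDef hM
  haveI : Invertible A := invertibleOfIsUnitDet _ hApd.det_pos.ne'.isUnit
  have hInv : (⅟A : Matrix m m ℝ) = A⁻¹ := invOf_eq_nonsing_inv A
  have h1 : M.det = A.det * det (M.toBlocks₂₂ - M.toBlocks₂₁ * A⁻¹ * M.toBlocks₁₂) := by
    conv_lhs => rw [← fromBlocks_toBlocks M]
    rw [det_fromBlocks₁₁, hInv]
  have hsym : ∀ i, M (Sum.inr 0) (Sum.inl i) = M (Sum.inl i) (Sum.inr 0) := fun i => by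
    have h := congrFun (congrFun hM.1 (Sum.inr 0)) (Sum.inl i)
    simpa [conjTranspose_apply] using h.symm
  have h2 : (M.toBlocks₂₁ * A⁻¹ * M.toBlocks₁₂) 0 0 = b ⬝ᵥ A⁻¹ *ᵥ b := by
    simp only [mul_apply, toBlocks₂₁, toBlocks₁₂, of_apply, dotProduct, mulVec, hsym,
      Finset.sum_mul, Finset.mul_sum, hb]
    rw [Finset.sum_comm]
    exact Finset.sum_congr rfl fun i _ => Finset.sum_congr rfl fun j _ => by ring
  rw [h1, det_fin_one]
  congr 1
  rw [Matrix.sub_apply, h2]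
  rfl

private lemma stmt19_hadamard : ∀ (n : ℕ) (P : Matrix (Fin n) (Fin n) ℝ), P.PosDef →
    P.det ≤ ∏ i, P i i := by
  intro n
  induction n with
  | zero => intro P hP; simp
  | succ n ih =>
    intro P hP
    set E : (Fin n ⊕ Fin 1) ≃ Fin (n + 1) := finSumFinEquiv with hE
    set Q : Matrix (Fin n ⊕ Fin 1) (Fin n ⊕ Fin 1) ℝ := P.submatrix E E with hQdef
    have hQ : Q.PosDef := stmt19_posDef_submatrix_equiv hP E
    set A := Q.toBlocks₁₁ with hAdef
    have hA : A.PosDef := stmt19_toBlocks₁₁_posDef hQ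
    set b : Fin n → ℝ := fun i => Q (Sum.inl i) (Sum.inr 0) with hbdef
    set δ : ℝ := Q (Sum.inr 0) (Sum.inr 0) with hδdef
    set s : ℝ := δ - b ⬝ᵥ A⁻¹ *ᵥ b with hsdef
    have hdet : P.det = A.det * s := by
      have h := stmt19_corner_det hQ
      rwa [det_submatrix_equiv_self] at h
    have hq : 0 ≤ b ⬝ᵥ A⁻¹ *ᵥ b := by
      have h := hA.inv.posSemidef.dotProduct_mulVec_nonneg b
      rwa [star_trivial] at h
    have hs : s ≤ δ := by simp only [hsdef]; linarith
    have hspos : 0 < s := by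
      have h1 := hP.det_pos
      rw [hdet] at h1
      nlinarith [hA.det_pos]
    have hprod : ∏ j, P j j = (∏ i, A i i) * δ := by
      rw [← E.prod_comp (fun j => P j j), Fintype.prod_sum_type]
      simp [hQdef, hAdef, hδdef, toBlocks₁₁]
    rw [hdet, hprod]
    have hAprodpos : 0 < ∏ i, A i i := lt_of_lt_of_le hA.det_pos (ih A hA)
    exact mul_le_mul (ih A hA) hs hspos.le hAprodpos.le

open scoped MatrixOrder in
private lemma stmt19_sqrt {T : Matrix m m ℝ} (h : T.PosSemidef) :
    ∃ R : Matrix m m ℝ, R.PosSemidef ∧ R * R = T :=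
  ⟨CFC.sqrt T, (CFC.sqrt_nonneg T).posSemidef, CFC.sqrt_mul_sqrt_self T h.nonneg⟩

end Stmt19Aux

theorem stmt_19 {n : ℕ} (hn : 0 < n) (S : Matrix (Fin n) (Fin n) ℝ)
    (hS : S.PosDef) (a : Fin n → ℝ) (ha : ∀ i, a i ∈ Set.Icc (0 : ℝ) 1) :
    (S + diagonal a).det ^ ((n : ℝ)⁻¹) ≥
      (∏ i, (1 - a i)) ^ ((n : ℝ)⁻¹) * S.det ^ ((n : ℝ)⁻¹) +
        (∏ i, a i) ^ ((n : ℝ)⁻¹) * (S + 1).det ^ ((n : ℝ)⁻¹) := by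
  classical
  set r : ℝ := (n : ℝ)⁻¹ with hr
  have hnR : (0:ℝ) < (n:ℝ) := by exact_mod_cast hn
  have hrpos : 0 < r := inv_pos.mpr hnR
  set A : Matrix (Fin n) (Fin n) ℝ := diagonal a with hAdef
  have hApsd : A.PosSemidef := PosSemidef.diagonal (fun i => (ha i).1)
  have hM : (S + A).PosDef := hS.add_posSemidef hApsd
  have hS1 : (S + 1).PosDef := hS.add_posSemidef PosDef.one.posSemidef
  set c : ℝ := (S + A).det ^ r with hc
  have hcpos : 0 < c := Real.rpow_pos_of_pos hM.det_pos _
  set T : Matrix (Fin n) (Fin n) ℝ := c • (S + A)⁻¹ with hT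
  have hTpd : T.PosDef := stmt19_smul_posDef hM.inv hcpos
  have hTdet : T.det = 1 := by
    rw [hT, det_smul, det_nonsing_inv, Ring.inverse_eq_inv, Fintype.card_fin]
    rw [hc, Real.rpow_inv_natCast_pow hM.det_pos.le hn.ne']
    exact mul_inv_cancel₀ hM.det_pos.ne'
  obtain ⟨R, hRpsd, hRR⟩ := stmt19_sqrt hTpd.posSemidef
  have hRdet2 : R.det * R.det = 1 := by rw [← det_mul, hRR, hTdet]
  have hRpd : R.PosDef := stmt19_posDef_of_psd_det hRpsd
    (isUnit_iff_ne_zero.mpr (fun h => by rw [h, zero_mul] at hRdet2; exact zero_ne_one hRdet2))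
  have hRdet : R.det = 1 := by nlinarith [hRpd.det_pos]
  have hRH : Rᴴ = R := hRpsd.1
  -- the conjugated matrices
  set X : Matrix (Fin n) (Fin n) ℝ := R * S * R with hX
  set Y : Matrix (Fin n) (Fin n) ℝ := R * (S + 1) * R with hY
  have hXpsd : X.PosSemidef := by
    have h := hS.posSemidef.mul_mul_conjTranspose_same R
    rwa [hRH] at h
  have hYpsd : Y.PosSemidef := by
    have h := hS1.posSemidef.mul_mul_conjTranspose_same R
    rwa [hRH] at h
  have hXdet : X.det = S.det := by
    rw [hX, det_mul, det_mul, hRdet, one_mul, mul_one]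
  have hYdet : Y.det = (S + 1).det := by
    rw [hY, det_mul, det_mul, hRdet, one_mul, mul_one]
  have hXpd : X.PosDef := stmt19_posDef_of_psd_det hXpsd
    (by rw [hXdet]; exact hS.det_pos.ne'.isUnit)
  have hYpd : Y.PosDef := stmt19_posDef_of_psd_det hYpsd
    (by rw [hYdet]; exact hS1.det_pos.ne'.isUnit)
  have hYX : Y = X + T := by
    rw [hY, hX, Matrix.mul_add, Matrix.add_mul, Matrix.mul_one, hRR]
  -- trace identity
  have htrace : ∑ i, ((1 - a i) * X i i + a i * Y i i) = (n : ℝ) * c := by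
    have hsplit : ∀ i, (1 - a i) * X i i + a i * Y i i = X i i + (T * A) i i := by
      intro i
      rw [hYX, Matrix.add_apply, hT]
      rw [Matrix.mul_apply]
      simp only [hAdef, diagonal_apply]
      rw [Finset.sum_eq_single i (fun j _ hj => by simp [hj]) (by simp)]
      simp
      ring
    rw [Finset.sum_congr rfl (fun i _ => hsplit i), Finset.sum_add_distrib]
    have h1 : ∑ i, X i i = (T * S).trace := by
      have : X.trace = (T * S).trace := by
        rw [hX, Matrix.trace_mul_comm (R * S) R, ← Matrix.mul_assoc, hRR]
      rw [← this]
      rfl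
    have h2 : ∑ i, (T * A) i i = (T * A).trace := rfl
    rw [h1, h2, ← Matrix.trace_add, ← Matrix.mul_add]
    rw [hT, Matrix.smul_mul, nonsing_inv_mul _ hM.det_pos.ne'.isUnit]
    rw [Matrix.trace_smul, Matrix.trace_one, Fintype.card_fin]
    simp [mul_comm]
  -- diagonal entries nonneg
  have hXd : ∀ i, 0 ≤ X i i := fun i => stmt19_diag_nonneg hXpsd i
  have hYd : ∀ i, 0 ≤ Y i i := fun i => stmt19_diag_nonneg hYpsd i
  -- Hadamard
  have hHX : S.det ≤ ∏ i, X i i := by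
    have h := stmt19_hadamard n X hXpd
    rwa [hXdet] at h
  have hHY : (S + 1).det ≤ ∏ i, Y i i := by
    have h := stmt19_hadamard n Y hYpd
    rwa [hYdet] at h
  -- AM-GM for the two groups
  have hwsum : ∑ _i : Fin n, r = 1 := by
    rw [Finset.sum_const, Finset.card_univ, Fintype.card_fin, nsmul_eq_mul, hr]
    field_simp
  have hg1 : (∏ i, ((1 - a i) * X i i)) ^ r ≤ ∑ i, r * ((1 - a i) * X i i) := by
    rw [← Real.finset_prod_rpow _ _ (fun i _ => mul_nonneg (by linarith [(ha i).2]) (hXd i))]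
    exact Real.geom_mean_le_arith_mean_weighted _ _ _ (fun i _ => hrpos.le) hwsum
      (fun i _ => mul_nonneg (by linarith [(ha i).2]) (hXd i))
  have hg2 : (∏ i, (a i * Y i i)) ^ r ≤ ∑ i, r * (a i * Y i i) := by
    rw [← Real.finset_prod_rpow _ _ (fun i _ => mul_nonneg (ha i).1 (hYd i))]
    exact Real.geom_mean_le_arith_mean_weighted _ _ _ (fun i _ => hrpos.le) hwsum
      (fun i _ => mul_nonneg (ha i).1 (hYd i))
  -- lower bound products
  have hb1 : (∏ i, (1 - a i)) ^ r * S.det ^ r ≤ (∏ i, ((1 - a i) * X i i)) ^ r := by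
    rw [Finset.prod_mul_distrib,
      ← Real.mul_rpow (Finset.prod_nonneg fun i _ => by linarith [(ha i).2]) hS.det_pos.le]
    apply Real.rpow_le_rpow
      (mul_nonneg (Finset.prod_nonneg fun i _ => by linarith [(ha i).2]) hS.det_pos.le)
      (mul_le_mul_of_nonneg_left hHX (Finset.prod_nonneg fun i _ => by linarith [(ha i).2]))
      hrpos.le
  have hb2 : (∏ i, a i) ^ r * (S + 1).det ^ r ≤ (∏ i, (a i * Y i i)) ^ r := by
    rw [Finset.prod_mul_distrib,
      ← Real.mul_rpow (Finset.prod_nonneg fun i _ => (ha i).1) hS1.det_pos.le]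
    apply Real.rpow_le_rpow
      (mul_nonneg (Finset.prod_nonneg fun i _ => (ha i).1) hS1.det_pos.le)
      (mul_le_mul_of_nonneg_left hHY (Finset.prod_nonneg fun i _ => (ha i).1))
      hrpos.le
  -- combine
  have hfinal : (∏ i, (1 - a i)) ^ r * S.det ^ r + (∏ i, a i) ^ r * (S + 1).det ^ r
      ≤ c := by
    calc (∏ i, (1 - a i)) ^ r * S.det ^ r + (∏ i, a i) ^ r * (S + 1).det ^ r
        ≤ (∑ i, r * ((1 - a i) * X i i)) + (∑ i, r * (a i * Y i i)) :=
          add_le_add (le_trans hb1 hg1) (le_trans hb2 hg2)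
      _ = r * ∑ i, ((1 - a i) * X i i + a i * Y i i) := by
          rw [← Finset.sum_add_distrib, Finset.mul_sum]
          exact Finset.sum_congr rfl fun i _ => by ring
      _ = r * ((n : ℝ) * c) := by rw [htrace]
      _ = c := by rw [hr]; field_simp
  exact hfinal
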